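/- Weak-type bound for the fractional maximal operator: Let 0 ≤ α < n, p ≥ 1 with p < n/α (any p ≥ 1 when α = 0 with q = p), and define q by 1/q = 1/p − α/n. Then there is a constant c = c(n,α,p) such that for every weight w ∈ A_{p,q} (interpreted as the A_{1,q} condition when p = 1) and every measurable f, ‖M_α f‖_{L^{q,∞}(w^q)} ≤ c [w]_{A_{p,q}}^{1/q} ‖w·f‖_{L^{p}(ℝⁿ)}. -/

import Mathlib

open MeasureTheory ENNReal Set

noncomputable section

/-- Euclidean space `ℝⁿ`. -/
abbrev Euc (n : ℕ) := EuclideanSpace ℝ (Fin n)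

variable {n : ℕ}

/-- The axis-parallel closed cube with lower corner `a` and side length `h`. -/
def Cube (a : Euc n) (h : ℝ) : Set (Euc n) :=
  {x | ∀ i, a i ≤ x i ∧ x i ≤ a i + h}

/-- The weighted measure `u(E) = ∫_E u dx` of a set. -/
def wMeas (u : Euc n → ℝ) (E : Set (Euc n)) : ℝ≥0∞ :=
  ∫⁻ x in E, ENNReal.ofReal (u x)

/-- The dual exponent `p' = p/(p-1)`. -/
def dualExp (p : ℝ) : ℝ := p / (p - 1)

/-- The `A_{p,q}` constant of a weight `w` (with the `A_{1,q}` convention when `p = 1`). -/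
def Apq (p q : ℝ) (w : Euc n → ℝ) : ℝ≥0∞ :=
  ⨆ (a : Euc n) (h : ℝ) (_ : 0 < h),
    ((volume (Cube a h))⁻¹ * ∫⁻ x in Cube a h, ENNReal.ofReal (w x) ^ q) *
      (if p = 1 then
        (essSup (fun x => (ENNReal.ofReal (w x))⁻¹) (volume.restrict (Cube a h))) ^ q
      else
        ((volume (Cube a h))⁻¹ * ∫⁻ x in Cube a h,
            ENNReal.ofReal (w x) ^ (-(dualExp p))) ^ (q / dualExp p))

/-- The weighted Lebesgue norm `‖w f‖_{L^p(ℝⁿ)}`. -/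
def wLp (w f : Euc n → ℝ) (p : ℝ) : ℝ≥0∞ :=
  (∫⁻ x, (ENNReal.ofReal (w x) * ENNReal.ofReal |f x|) ^ p) ^ (1 / p)

/-- The weighted Lebesgue norm `‖w g‖_{L^q(ℝⁿ)}` of an `ℝ≥0∞`-valued function. -/
def wLpE (w : Euc n → ℝ) (g : Euc n → ℝ≥0∞) (q : ℝ) : ℝ≥0∞ :=
  (∫⁻ x, (ENNReal.ofReal (w x) * g x) ^ q) ^ (1 / q)

/-- The weak norm `‖g‖_{L^{q,∞}(u)} = sup_{λ>0} λ u({|g|>λ})^{1/q}`. -/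
def weakLp (u : Euc n → ℝ) (g : Euc n → ℝ) (q : ℝ) : ℝ≥0∞ :=
  ⨆ (t : ℝ) (_ : 0 < t), ENNReal.ofReal t * wMeas u {x | t < |g x|} ^ (1 / q)

/-- The weak norm of an `ℝ≥0∞`-valued function. -/
def weakLpE (u : Euc n → ℝ) (g : Euc n → ℝ≥0∞) (q : ℝ) : ℝ≥0∞ :=
  ⨆ (t : ℝ) (_ : 0 < t), ENNReal.ofReal t * wMeas u {x | ENNReal.ofReal t < g x} ^ (1 / q)

/-- The fractional integral (Riesz potential) `I_α f(x) = ∫ |f(y)| |x-y|^{α-n} dy`. -/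
def riesz (α : ℝ) (f : Euc n → ℝ) (x : Euc n) : ℝ≥0∞ :=
  ∫⁻ y, ENNReal.ofReal |f y| * ENNReal.ofReal (‖x - y‖ ^ (α - (n : ℝ)))

/-- The fractional maximal operator `M_α f(x) = sup_{Q ∋ x} |Q|^{α/n-1} ∫_Q |f|`. -/
def fracMax (α : ℝ) (f : Euc n → ℝ) (x : Euc n) : ℝ≥0∞ :=
  ⨆ (a : Euc n) (h : ℝ) (_ : 0 < h) (_ : x ∈ Cube a h),
    volume (Cube a h) ^ (α / (n : ℝ) - 1) * ∫⁻ y in Cube a h, ENNReal.ofReal |f y|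



open Metric

-- geometry

lemma cube_eq_preimage (a : Euc n) (h : ℝ) :
    Cube a h = (MeasurableEquiv.toLp 2 (Fin n → ℝ)).symm ⁻¹' (Set.univ.pi fun i => Icc (a i) (a i + h)) := by
  ext x; simp [Cube, Icc]

lemma volume_cube (a : Euc n) (h : ℝ) :
    volume (Cube a h) = ENNReal.ofReal h ^ n := by
  rw [cube_eq_preimage,
    (EuclideanSpace.volume_preserving_symm_measurableEquiv_toLp (Fin n)).measure_preimage
      (MeasurableSet.univ_pi fun i => measurableSet_Icc).nullMeasurableSet,
    volume_pi, Measure.pi_pi]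
  simp [Real.volume_Icc]

lemma measurableSet_cube (a : Euc n) (h : ℝ) : MeasurableSet (Cube a h) := by
  rw [cube_eq_preimage]
  exact (MeasurableEquiv.toLp 2 (Fin n → ℝ)).symm.measurable
    (MeasurableSet.univ_pi fun i => measurableSet_Icc)

lemma coord_dist_le (x y : Euc n) (i : Fin n) : |x i - y i| ≤ dist x y := by
  rw [EuclideanSpace.dist_eq]
  have h1 : |x i - y i| = Real.sqrt ((x i - y i)^2) := (Real.sqrt_sq_eq_abs _).symm
  rw [h1]
  apply Real.sqrt_le_sqrt
  have := Finset.single_le_sum (f := fun j => dist (x j) (y j) ^ 2)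
    (fun j _ => sq_nonneg _) (Finset.mem_univ i)
  simpa [Real.dist_eq] using this

lemma cube_subset_closedBall {a : Euc n} {h : ℝ} (hh : 0 ≤ h) {x : Euc n}
    (hx : x ∈ Cube a h) : Cube a h ⊆ closedBall x (h * Real.sqrt n) := by
  intro y hy
  rw [mem_closedBall, EuclideanSpace.dist_eq]
  have key : ∀ i, dist (y i) (x i) ^ 2 ≤ h ^ 2 := by
    intro i
    have h1 := hx i; have h2 := hy i
    rw [Real.dist_eq]
    have : |y i - x i| ≤ h := abs_sub_le_iff.2 ⟨by linarith, by linarith⟩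
    nlinarith [abs_nonneg (y i - x i)]
  calc Real.sqrt (∑ i, dist (y i) (x i) ^ 2) ≤ Real.sqrt (∑ _i : Fin n, h ^ 2) :=
        Real.sqrt_le_sqrt (Finset.sum_le_sum fun i _ => key i)
    _ = h * Real.sqrt n := by
        rw [Finset.sum_const, Finset.card_univ, Fintype.card_fin, nsmul_eq_mul,
          Real.sqrt_mul' _ (by positivity), Real.sqrt_sq hh, mul_comm]

lemma closedBall_subset_cube {x : Euc n} {ρ : ℝ} :
    closedBall x ρ ⊆ Cube (WithLp.toLp 2 fun i => x i - ρ) (2 * ρ) := by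
  intro y hy i
  have h1 := coord_dist_le y x i
  rw [mem_closedBall] at hy
  have h2 : |y i - x i| ≤ ρ := le_trans h1 hy
  rw [abs_sub_le_iff] at h2
  refine ⟨?_, ?_⟩ <;> · show _ ≤ _; dsimp only; linarith [h2.1, h2.2]


-- truncated maximal function
def gR (α R : ℝ) (f : Euc n → ℝ) (x : Euc n) : ℝ≥0∞ :=
  ⨆ (a : Euc n) (h : ℝ) (_ : 0 < h) (_ : h < R) (_ : x ∈ Cube a h),
    volume (Cube a h) ^ (α / (n : ℝ) - 1) * ∫⁻ y in Cube a h, ENNReal.ofReal |f y|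

lemma gR_mono {α : ℝ} {f : Euc n → ℝ} {x : Euc n} :
    Monotone (fun R => gR α R f x) := by
  intro R S hRS
  refine iSup_le fun a => iSup_le fun h => iSup_le fun h0 => iSup_le fun hR => iSup_le fun hm => ?_
  exact le_iSup_of_le a (le_iSup_of_le h (le_iSup_of_le h0
    (le_iSup_of_le (lt_of_lt_of_le hR hRS) (le_iSup_of_le hm le_rfl))))

lemma fracMax_eq_iSup_gR (α : ℝ) (f : Euc n → ℝ) (x : Euc n) :
    fracMax α f x = ⨆ k : ℕ, gR α (k + 1) f x := by
  apply le_antisymm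
  · refine iSup_le fun a => iSup_le fun h => iSup_le fun h0 => iSup_le fun hm => ?_
    obtain ⟨k, hk⟩ := exists_nat_gt h
    have hk1 : h < (k : ℝ) + 1 := by linarith
    exact le_iSup_of_le k (le_iSup_of_le a (le_iSup_of_le h (le_iSup_of_le h0
      (le_iSup_of_le hk1 (le_iSup_of_le hm le_rfl)))))
  · refine iSup_le fun k => ?_
    refine iSup_le fun a => iSup_le fun h => iSup_le fun h0 => iSup_le fun _ => iSup_le fun hm => ?_
    exact le_iSup_of_le a (le_iSup_of_le h (le_iSup_of_le h0 (le_iSup_of_le hm le_rfl)))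

lemma exists_cube_of_lt_gR {α R t : ℝ} {f : Euc n → ℝ} {x : Euc n}
    (hx : ENNReal.ofReal t < gR α R f x) :
    ∃ a h, 0 < h ∧ h < R ∧ x ∈ Cube a h ∧
      ENNReal.ofReal t < volume (Cube a h) ^ (α / (n : ℝ) - 1) *
        ∫⁻ y in Cube a h, ENNReal.ofReal |f y| := by
  simp only [gR, lt_iSup_iff] at hx
  obtain ⟨a, h, h0, hR, hm, hlt⟩ := hx
  exact ⟨a, h, h0, hR, hm, hlt⟩

-- sum of rpow
lemma rpow_add_le {a b : ℝ≥0∞} {r : ℝ} (hr : 1 ≤ r) : a ^ r + b ^ r ≤ (a + b) ^ r := by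
  have hr0 : r ≠ 0 := by positivity
  have h2 := ENNReal.rpow_le_rpow (ENNReal.rpow_add_rpow_le_add a b hr)
    (le_trans zero_le_one hr)
  rwa [← ENNReal.rpow_mul, one_div_mul_cancel hr0, ENNReal.rpow_one] at h2

lemma finset_sum_rpow_le {ι : Type*} (s : Finset ι) (g : ι → ℝ≥0∞) {r : ℝ} (hr : 1 ≤ r) :
    ∑ i ∈ s, g i ^ r ≤ (∑ i ∈ s, g i) ^ r := by
  classical
  induction s using Finset.induction_on with
  | empty => simp [ENNReal.zero_rpow_of_pos (lt_of_lt_of_le zero_lt_one hr)]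
  | insert _ _ hnot ih =>
    rw [Finset.sum_insert hnot, Finset.sum_insert hnot]
    calc _ ≤ _ + _ := add_le_add_right ih _
      _ ≤ _ := rpow_add_le hr

lemma tsum_rpow_le {ι : Type*} (g : ι → ℝ≥0∞) {r : ℝ} (hr : 1 ≤ r) :
    ∑' i, g i ^ r ≤ (∑' i, g i) ^ r := by
  rw [ENNReal.tsum_eq_iSup_sum]
  refine iSup_le fun s => le_trans (finset_sum_rpow_le s g hr) ?_
  exact ENNReal.rpow_le_rpow (ENNReal.sum_le_tsum s) (le_trans zero_le_one hr)

section Core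
variable {w f : Euc n → ℝ} {p q α : ℝ}

lemma holder_gt (hp1 : 1 < p) (hw : Measurable w) (hf : Measurable f)
    (hwpos : ∀ᵐ x, 0 < w x) (Q : Set (Euc n)) :
    ∫⁻ y in Q, ENNReal.ofReal |f y| ≤
      (∫⁻ y in Q, (ENNReal.ofReal (w y) * ENNReal.ofReal |f y|) ^ p) ^ (1/p) *
        (∫⁻ y in Q, ENNReal.ofReal (w y) ^ (-(dualExp p))) ^ (1/dualExp p) := by
  have hc : p.HolderConjugate (dualExp p) := Real.HolderConjugate.conjExponent hp1
  have hae : (fun y => ENNReal.ofReal |f y|) =ᵐ[volume.restrict Q]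
      ((fun y => ENNReal.ofReal (w y) * ENNReal.ofReal |f y|) *
        fun y => (ENNReal.ofReal (w y))⁻¹) := by
    filter_upwards [ae_restrict_of_ae hwpos] with y hy
    have h0 : ENNReal.ofReal (w y) ≠ 0 := (ENNReal.ofReal_pos.2 hy).ne'
    simp only [Pi.mul_apply]
    rw [mul_comm (ENNReal.ofReal (w y)) _, mul_assoc,
      ENNReal.mul_inv_cancel h0 ENNReal.ofReal_ne_top, mul_one]
  rw [lintegral_congr_ae hae]
  have H := ENNReal.lintegral_mul_le_Lp_mul_Lq (volume.restrict Q) hc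
    ((hw.ennreal_ofReal.mul hf.abs.ennreal_ofReal).aemeasurable)
    (hw.ennreal_ofReal.inv.aemeasurable)
  simp only [Pi.inv_apply, ENNReal.inv_rpow] at H
  simp only [ENNReal.rpow_neg]
  exact H

lemma holder_one (hw : Measurable w) (hf : Measurable f)
    (hwpos : ∀ᵐ x, 0 < w x) (Q : Set (Euc n)) :
    ∫⁻ y in Q, ENNReal.ofReal |f y| ≤
      (∫⁻ y in Q, ENNReal.ofReal (w y) * ENNReal.ofReal |f y|) *
        essSup (fun x => (ENNReal.ofReal (w x))⁻¹) (volume.restrict Q) := by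
  set S := essSup (fun x => (ENNReal.ofReal (w x))⁻¹) (volume.restrict Q) with hS
  have hae : ∀ᵐ y ∂(volume.restrict Q), ENNReal.ofReal |f y| ≤
      (ENNReal.ofReal (w y) * ENNReal.ofReal |f y|) * S := by
    filter_upwards [ae_restrict_of_ae hwpos,
      ENNReal.ae_le_essSup (fun x => (ENNReal.ofReal (w x))⁻¹)] with y hy hess
    have h0 : ENNReal.ofReal (w y) ≠ 0 := (ENNReal.ofReal_pos.2 hy).ne'
    calc ENNReal.ofReal |f y|
        = (ENNReal.ofReal (w y) * ENNReal.ofReal |f y|) * (ENNReal.ofReal (w y))⁻¹ := by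
          rw [mul_comm (ENNReal.ofReal (w y)) _, mul_assoc,
            ENNReal.mul_inv_cancel h0 ENNReal.ofReal_ne_top, mul_one]
      _ ≤ _ := mul_le_mul_right hess _
  calc ∫⁻ y in Q, ENNReal.ofReal |f y|
      ≤ ∫⁻ y in Q, (ENNReal.ofReal (w y) * ENNReal.ofReal |f y|) * S := lintegral_mono_ae hae
    _ = _ := lintegral_mul_const'' S
        ((hw.ennreal_ofReal.mul hf.abs.ennreal_ofReal).aemeasurable)

lemma le_Apq (w : Euc n → ℝ) (a : Euc n) {h : ℝ} (hh : 0 < h) :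
    ((volume (Cube a h))⁻¹ * ∫⁻ x in Cube a h, ENNReal.ofReal (w x) ^ q) *
      (if p = 1 then
        (essSup (fun x => (ENNReal.ofReal (w x))⁻¹) (volume.restrict (Cube a h))) ^ q
      else
        ((volume (Cube a h))⁻¹ * ∫⁻ x in Cube a h,
            ENNReal.ofReal (w x) ^ (-(dualExp p))) ^ (q / dualExp p)) ≤ Apq p q w :=
  le_iSup_of_le a (le_iSup_of_le h (le_iSup_of_le hh le_rfl))

end Core

lemma exponent_zero {α p q : ℝ} (hn : 0 < n) (hp : 1 ≤ p) (hq0 : q ≠ 0)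
    (hq : 1/q = 1/p - α/n) :
    q * (α/(n:ℝ) - 1) + (1 + q / dualExp p) = 0 := by
  have hN : (n:ℝ) ≠ 0 := Nat.cast_ne_zero.2 hn.ne'
  have hp0 : p ≠ 0 := by positivity
  have hd : q / dualExp p = q * (p-1) / p := by
    unfold dualExp
    rcases eq_or_lt_of_le hp with h1 | h1
    · simp [← h1]
    · rw [div_div_eq_mul_div, mul_comm]
  have hα : α/(n:ℝ) = 1/p - 1/q := by linarith
  rw [hd, hα]
  field_simp
  ring

section PerCube
variable {w f : Euc n → ℝ} {p q α : ℝ}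

lemma per_cube (hn : 0 < n) (hp : 1 ≤ p) (hq0 : 0 < q)
    (hqe : 1/q = 1/p - α/(n:ℝ))
    (hw : Measurable w) (hf : Measurable f) (hwpos : ∀ᵐ x, 0 < w x)
    {t : ℝ} (ht : 0 < t) {a a' : Euc n} {h : ℝ} (hh : 0 < h)
    (hsub : Cube a h ⊆ Cube a' (8 * Real.sqrt n * h))
    (hlt : ENNReal.ofReal t < volume (Cube a h) ^ (α / (n:ℝ) - 1) *
        ∫⁻ y in Cube a h, ENNReal.ofReal |f y|) :
    ENNReal.ofReal t ^ q * ∫⁻ x in Cube a' (8 * Real.sqrt n * h), ENNReal.ofReal (w x) ^ q ≤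
      ENNReal.ofReal ((8 * Real.sqrt n) ^ ((n:ℝ) * (1 + q / dualExp p))) * Apq p q w *
        (∫⁻ y in Cube a h, (ENNReal.ofReal (w y) * ENNReal.ofReal |f y|) ^ p) ^ (q/p) := by
  have hp0 : (0:ℝ) < p := lt_of_lt_of_le zero_lt_one hp
  have hK0 : (0:ℝ) < 8 * Real.sqrt n := by
    have : 0 < Real.sqrt n := Real.sqrt_pos.2 (Nat.cast_pos.2 hn)
    linarith
  set K := 8 * Real.sqrt n with hKdef
  have hs' : 0 < K * h := mul_pos hK0 hh
  set Q := Cube a h with hQdef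
  set Q' := Cube a' (K * h) with hQ'def
  set V := volume Q with hVdef
  set V' := volume Q' with hV'def
  have hV0 : V ≠ 0 := by
    rw [hVdef, hQdef, volume_cube]
    exact pow_ne_zero _ (ENNReal.ofReal_pos.2 hh).ne'
  have hVtop : V ≠ ⊤ := by
    rw [hVdef, hQdef, volume_cube]
    exact ENNReal.pow_ne_top ENNReal.ofReal_ne_top
  have hV'0 : V' ≠ 0 := by
    rw [hV'def, hQ'def, volume_cube]
    exact pow_ne_zero _ (ENNReal.ofReal_pos.2 hs').ne'
  have hV'top : V' ≠ ⊤ := by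
    rw [hV'def, hQ'def, volume_cube]
    exact ENNReal.pow_ne_top ENNReal.ofReal_ne_top
  have hV' : V' = ENNReal.ofReal (K^n) * V := by
    rw [hV'def, hQ'def, hVdef, hQdef, volume_cube, volume_cube,
      ENNReal.ofReal_mul hK0.le, mul_pow, ← ENNReal.ofReal_pow hK0.le]
  set e := q / dualExp p with he_def
  have he : 0 ≤ e := by
    apply div_nonneg hq0.le
    unfold dualExp
    rcases eq_or_lt_of_le hp with h1 | h1
    · simp [← h1]
    · exact div_nonneg (by linarith) (by linarith)
  have h1e : (0:ℝ) ≤ 1 + e := by linarith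
  set A := ∫⁻ y in Q, (ENNReal.ofReal (w y) * ENNReal.ofReal |f y|) ^ p with hAdef
  set wq' := ∫⁻ x in Q', ENNReal.ofReal (w x) ^ q with hwq'def
  obtain ⟨S, fact1, fact2⟩ : ∃ S : ℝ≥0∞,
      ENNReal.ofReal t ≤ V ^ (α / (n:ℝ) - 1) * (A ^ (1/p) * S) ∧
      S ^ q * wq' ≤ Apq p q w * V' ^ ((1:ℝ) + e) := by
    rcases eq_or_lt_of_le hp with hp1 | hp1
    · -- p = 1
      have hp1' : p = 1 := hp1.symm
      subst hp1'
      have he0 : e = 0 := by simp [he_def, dualExp]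
      refine ⟨essSup (fun x => (ENNReal.ofReal (w x))⁻¹) (volume.restrict Q'), ?_, ?_⟩
      · have hmono : essSup (fun x => (ENNReal.ofReal (w x))⁻¹) (volume.restrict Q) ≤
            essSup (fun x => (ENNReal.ofReal (w x))⁻¹) (volume.restrict Q') :=
          essSup_mono_measure (Measure.absolutelyContinuous_of_le
            (Measure.restrict_mono hsub le_rfl))
        refine le_trans hlt.le (mul_le_mul_right ?_ _)
        refine le_trans (holder_one hw hf hwpos Q) ?_
        have hA1 : (∫⁻ y in Q, ENNReal.ofReal (w y) * ENNReal.ofReal |f y|) = A ^ (1/(1:ℝ)) := by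
          rw [hAdef]
          simp [ENNReal.rpow_one]
        rw [hA1]
        exact mul_le_mul_right hmono _
      · have hD := le_Apq (q := q) (p := (1:ℝ)) w a' hs'
        rw [if_pos rfl] at hD
        rw [he0, add_zero, ENNReal.rpow_one]
        set Sq := essSup (fun x => (ENNReal.ofReal (w x))⁻¹) (volume.restrict Q') ^ q with hSqdef
        have h2 : ((V'⁻¹ * wq') * Sq) * V' = Sq * (wq' * (V'⁻¹ * V')) := by ring
        rw [ENNReal.inv_mul_cancel hV'0 hV'top, mul_one] at h2
        calc Sq * wq'
            = ((V'⁻¹ * wq') * Sq) * V' := by rw [h2]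
          _ ≤ Apq 1 q w * V' := mul_le_mul_left hD _
    · -- p > 1
      set σ' := ∫⁻ x in Q', ENNReal.ofReal (w x) ^ (-(dualExp p)) with hσ'def
      refine ⟨σ' ^ (1/dualExp p), ?_, ?_⟩
      · refine le_trans hlt.le (mul_le_mul_right ?_ _)
        refine le_trans (holder_gt hp1 hw hf hwpos Q) ?_
        refine mul_le_mul_right ?_ _
        have hd0 : (0:ℝ) < dualExp p := by
          unfold dualExp; exact div_pos (by linarith) (by linarith)
        exact ENNReal.rpow_le_rpow (lintegral_mono_set hsub) (one_div_nonneg.2 hd0.le)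
      · have hD := le_Apq (q := q) (p := p) w a' hs'
        rw [if_neg (ne_of_gt hp1)] at hD
        have hSq : (σ' ^ (1/dualExp p)) ^ q = σ' ^ e := by
          rw [← ENNReal.rpow_mul, show 1/dualExp p * q = q / dualExp p by ring, he_def]
        have keyeq : σ' ^ e * wq' = ((V'⁻¹ * wq') * (V'⁻¹ * σ') ^ e) * V' ^ ((1:ℝ) + e) := by
          rw [ENNReal.mul_rpow_of_nonneg V'⁻¹ σ' he, ← ENNReal.rpow_neg_one V',
            ← ENNReal.rpow_mul]
          have hpow : V' ^ (-1:ℝ) * V' ^ ((-1) * e) * V' ^ ((1:ℝ)+e) = 1 := by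
            rw [← ENNReal.rpow_add _ _ hV'0 hV'top, ← ENNReal.rpow_add _ _ hV'0 hV'top,
              show (-1:ℝ) + (-1)*e + (1+e) = 0 by ring, ENNReal.rpow_zero]
          calc σ' ^ e * wq'
              = (σ' ^ e * wq') * (V' ^ (-1:ℝ) * V' ^ ((-1) * e) * V' ^ ((1:ℝ)+e)) := by
                rw [hpow, mul_one]
            _ = ((V' ^ (-1:ℝ) * wq') * (V' ^ ((-1)*e) * σ' ^ e)) * V' ^ ((1:ℝ)+e) := by
                ring
        rw [hSq, keyeq]
        exact mul_le_mul_left hD _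
  -- common tail
  have step1 : ENNReal.ofReal t ^ q ≤ V ^ ((α / (n:ℝ) - 1) * q) * (A ^ (q/p) * S ^ q) := by
    have h2 := ENNReal.rpow_le_rpow fact1 hq0.le
    rw [ENNReal.mul_rpow_of_nonneg _ _ hq0.le, ENNReal.mul_rpow_of_nonneg _ _ hq0.le,
      ← ENNReal.rpow_mul V, ← ENNReal.rpow_mul A, show 1/p * q = q/p by ring] at h2
    exact h2
  have hexp := exponent_zero (α := α) (p := p) (q := q) hn hp hq0.ne' hqe
  calc ENNReal.ofReal t ^ q * wq'
      ≤ (V ^ ((α / (n:ℝ) - 1) * q) * (A ^ (q/p) * S ^ q)) * wq' := mul_le_mul_left step1 _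
    _ = A ^ (q/p) * (S ^ q * wq') * V ^ ((α / (n:ℝ) - 1) * q) := by ring
    _ ≤ A ^ (q/p) * (Apq p q w * V' ^ ((1:ℝ) + e)) * V ^ ((α / (n:ℝ) - 1) * q) :=
        mul_le_mul_left (mul_le_mul_right fact2 _) _
    _ = (ENNReal.ofReal (K^n)) ^ ((1:ℝ)+e) * Apq p q w * A ^ (q/p) *
          (V ^ ((1:ℝ)+e) * V ^ ((α / (n:ℝ) - 1) * q)) := by
        rw [hV', ENNReal.mul_rpow_of_nonneg _ _ h1e]
        ring
    _ = ENNReal.ofReal (K ^ ((n:ℝ) * ((1:ℝ)+e))) * Apq p q w * A ^ (q/p) := by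
        rw [← ENNReal.rpow_add _ _ hV0 hVtop,
          show (1:ℝ)+e + (α / (n:ℝ) - 1) * q = 0 by linarith [hexp, mul_comm (α / (n:ℝ) - 1) q],
          ENNReal.rpow_zero, mul_one]
        rw [← Real.rpow_natCast K n, ENNReal.ofReal_rpow_of_nonneg (by positivity) h1e,
          ← Real.rpow_mul hK0.le]

lemma level_bound (hn : 0 < n) (hp : 1 ≤ p) (hq0 : 0 < q) (hpq : p ≤ q)
    (hqe : 1/q = 1/p - α/(n:ℝ))
    (hw : Measurable w) (hf : Measurable f) (hwpos : ∀ᵐ x, 0 < w x)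
    {t R : ℝ} (ht : 0 < t) :
    ENNReal.ofReal t ^ q *
      (volume.withDensity (fun x => ENNReal.ofReal (w x) ^ q))
        {x | ENNReal.ofReal t < gR α R f x} ≤
      ENNReal.ofReal ((8 * Real.sqrt n) ^ ((n:ℝ) * (1 + q / dualExp p))) * Apq p q w *
        (∫⁻ y, (ENNReal.ofReal (w y) * ENNReal.ofReal |f y|) ^ p) ^ (q/p) := by
  have hp0 : (0:ℝ) < p := lt_of_lt_of_le zero_lt_one hp
  have hsn : (0:ℝ) < Real.sqrt n := Real.sqrt_pos.2 (Nat.cast_pos.2 hn)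
  set ν := volume.withDensity (fun x => ENNReal.ofReal (w x) ^ q) with hν
  set E := {x | ENNReal.ofReal t < gR α R f x} with hE
  choose ca ch h0 hR' hmem hgt using fun i : ↥E => exists_cube_of_lt_gR i.2
  set r : ↥E → ℝ := fun i => ch i * Real.sqrt n with hr
  have hrpos : ∀ i, 0 < r i := fun i => mul_pos (h0 i) hsn
  obtain ⟨u, -, hdisj, hcover⟩ :=
    Vitali.exists_disjoint_subfamily_covering_enlargement_closedBall
      (univ : Set ↥E) (fun i => (i : Euc n)) r (R * Real.sqrt n)
      (fun i _ => mul_le_mul_of_nonneg_right (hR' i).le hsn.le) 4 (by norm_num)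
  have hcount : u.Countable :=
    hdisj.countable_of_nonempty_interior (fun i _ =>
      ⟨_, ball_subset_interior_closedBall (mem_ball_self (hrpos i))⟩)
  have hside : ∀ b : ↥E, 2 * (4 * r b) = 8 * Real.sqrt n * ch b := by
    intro b; simp only [hr]; ring
  set Q' : ↥E → Set (Euc n) :=
    fun b => Cube (WithLp.toLp 2 fun j => (b : Euc n) j - 4 * r b) (8 * Real.sqrt n * ch b) with hQ'
  have hballQ' : ∀ b : ↥E, closedBall (b : Euc n) (4 * r b) ⊆ Q' b := by
    intro b
    have := closedBall_subset_cube (x := (b : Euc n)) (ρ := 4 * r b)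
    rwa [hside b] at this
  have hEcover : E ⊆ ⋃ b ∈ u, Q' b := by
    intro x hx
    obtain ⟨b, hb, hsubball⟩ := hcover ⟨x, hx⟩ (mem_univ _)
    have hx1 : x ∈ closedBall ((⟨x, hx⟩ : ↥E) : Euc n) (r ⟨x, hx⟩) :=
      mem_closedBall_self (hrpos _).le
    exact mem_biUnion hb (hballQ' b (hsubball hx1))
  have hQsub : ∀ b : ↥E, Cube (ca b) (ch b) ⊆ Q' b := by
    intro b
    refine subset_trans (cube_subset_closedBall (h0 b).le (hmem b)) ?_
    refine subset_trans (closedBall_subset_closedBall ?_) (hballQ' b)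
    have h1 : r b = ch b * Real.sqrt n := rfl
    rw [← h1]
    linarith [hrpos b]
  have hpairwise : Pairwise (Function.onFun Disjoint fun b : ↥u => closedBall ((b : ↥E) : Euc n) (r b)) :=
    fun i j hij => hdisj i.2 j.2 (Subtype.coe_injective.ne hij)
  have hq1 : 1 ≤ q / p := (one_le_div hp0).2 hpq
  calc ENNReal.ofReal t ^ q * ν E
      ≤ ENNReal.ofReal t ^ q * ∑' b : ↥u, ν (Q' b) :=
        mul_le_mul_right (le_trans (measure_mono hEcover) (measure_biUnion_le ν hcount Q')) _
    _ = ∑' b : ↥u, ENNReal.ofReal t ^ q * ν (Q' b) := ENNReal.tsum_mul_left.symm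
    _ ≤ ∑' b : ↥u, ENNReal.ofReal ((8 * Real.sqrt n) ^ ((n:ℝ) * (1 + q / dualExp p))) *
          Apq p q w *
          (∫⁻ y in closedBall ((b : ↥E) : Euc n) (r b),
            (ENNReal.ofReal (w y) * ENNReal.ofReal |f y|) ^ p) ^ (q/p) := by
        refine ENNReal.tsum_le_tsum fun b => ?_
        have hν' : ν (Q' b) = ∫⁻ x in Q' b, ENNReal.ofReal (w x) ^ q :=
          withDensity_apply _ (measurableSet_cube _ _)
        rw [hν']
        refine le_trans (per_cube hn hp hq0 hqe hw hf hwpos ht (h0 b) (hQsub b)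
          (hgt b)) ?_
        refine mul_le_mul_right (ENNReal.rpow_le_rpow ?_ (by positivity)) _
        exact lintegral_mono_set (cube_subset_closedBall (h0 b).le (hmem b))
    _ = ENNReal.ofReal ((8 * Real.sqrt n) ^ ((n:ℝ) * (1 + q / dualExp p))) * Apq p q w *
          ∑' b : ↥u, (∫⁻ y in closedBall ((b : ↥E) : Euc n) (r b),
            (ENNReal.ofReal (w y) * ENNReal.ofReal |f y|) ^ p) ^ (q/p) :=
        ENNReal.tsum_mul_left
    _ ≤ ENNReal.ofReal ((8 * Real.sqrt n) ^ ((n:ℝ) * (1 + q / dualExp p))) * Apq p q w *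
          (∑' b : ↥u, ∫⁻ y in closedBall ((b : ↥E) : Euc n) (r b),
            (ENNReal.ofReal (w y) * ENNReal.ofReal |f y|) ^ p) ^ (q/p) :=
        mul_le_mul_right (tsum_rpow_le _ hq1) _
    _ ≤ ENNReal.ofReal ((8 * Real.sqrt n) ^ ((n:ℝ) * (1 + q / dualExp p))) * Apq p q w *
          (∫⁻ y, (ENNReal.ofReal (w y) * ENNReal.ofReal |f y|) ^ p) ^ (q/p) := by
        haveI : Countable ↥u := hcount.to_subtype
        refine mul_le_mul_right (ENNReal.rpow_le_rpow ?_ (by positivity)) _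
        rw [← lintegral_iUnion (fun b => measurableSet_closedBall) hpairwise]
        exact setLIntegral_le_lintegral _ _

end PerCube

-- big cubes exhaust space
lemma iUnion_bigCube (hn : 0 < n) : (⋃ m : ℕ, Cube (n := n) (WithLp.toLp 2 fun _ => -(m:ℝ)) (2*m)) = univ := by
  refine eq_univ_of_forall fun x => ?_
  obtain ⟨m, hm⟩ := exists_nat_gt (dist x 0)
  refine mem_iUnion.2 ⟨m, fun i => ?_⟩
  have h1 : |x i - (0:Euc n) i| ≤ dist x 0 := coord_dist_le x 0 i
  have h2 : (0:Euc n) i = 0 := rfl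
  rw [h2, sub_zero] at h1
  have := abs_le.1 (le_trans h1 hm.le)
  constructor
  · simpa using this.1
  · have : x i ≤ m := this.2
    simp only []
    linarith

lemma bigCube_mono : Monotone (fun m : ℕ => Cube (n := n) (WithLp.toLp 2 fun _ => -(m:ℝ)) (2*m)) := by
  intro k l hkl x hx i
  have h1 := hx i
  have h2 : (k:ℝ) ≤ l := Nat.cast_le.2 hkl
  simp only [] at h1 ⊢
  constructor <;> linarith [h1.1, h1.2]

section Degenerate
variable {w : Euc n → ℝ} {p q : ℝ}

-- positivity of the cube integral of W^q under a.e. positivity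
lemma lintegral_wq_pos (hn : 0 < n) (hq0 : 0 < q) (hw : Measurable w)
    (hwpos : ∀ᵐ x, 0 < w x) {a : Euc n} {h : ℝ} (hh : 0 < h) :
    0 < ∫⁻ x in Cube a h, ENNReal.ofReal (w x) ^ q := by
  have hmeas : Measurable fun x => ENNReal.ofReal (w x) ^ q :=
    hw.ennreal_ofReal.pow_const q
  rw [lintegral_pos_iff_support hmeas]
  set μ := volume.restrict (Cube a h)
  have hcompl : μ (Function.support fun x => ENNReal.ofReal (w x) ^ q)ᶜ = 0 := by
    refine measure_mono_null ?_ (ae_restrict_of_ae hwpos : ∀ᵐ x ∂μ, 0 < w x)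
    intro x hx
    simp only [Function.mem_support, not_not, mem_compl_iff] at hx
    intro hpos
    rw [ENNReal.rpow_eq_zero_iff] at hx
    rcases hx with ⟨h1, -⟩ | ⟨h1, -⟩
    · exact absurd (ENNReal.ofReal_pos.2 hpos).ne' (by simpa using h1)
    · exact ENNReal.ofReal_ne_top h1
  have huniv : μ univ = volume (Cube a h) := by simp [μ]
  have hVpos : 0 < volume (Cube a h) := by
    rw [volume_cube]
    exact pos_iff_ne_zero.2 (pow_ne_zero _ (ENNReal.ofReal_pos.2 hh).ne')
  by_contra hzero
  push_neg at hzero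
  have h0 : μ (Function.support fun x => ENNReal.ofReal (w x) ^ q) = 0 := le_antisymm hzero (zero_le)
  have := measure_union_le (μ := μ) (Function.support fun x => ENNReal.ofReal (w x) ^ q)
    (Function.support fun x => ENNReal.ofReal (w x) ^ q)ᶜ
  rw [union_compl_self, h0, hcompl, huniv] at this
  simp at this
  exact absurd this hVpos.ne'

lemma Apq_pos (hn : 0 < n) (hp : 1 ≤ p) (hq0 : 0 < q) (hw : Measurable w)
    (hwpos : ∀ᵐ x, 0 < w x) : 0 < Apq p q w := by
  have hh1 : (0:ℝ) < 1 := one_pos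
  have hV0 : volume (Cube (0 : Euc n) 1) ≠ 0 := by
    rw [volume_cube]
    exact pow_ne_zero _ (by simp)
  have hVtop : volume (Cube (0 : Euc n) 1) ≠ ⊤ := by
    rw [volume_cube]; exact ENNReal.pow_ne_top ENNReal.ofReal_ne_top
  have hfac1 : 0 < (volume (Cube (0 : Euc n) 1))⁻¹ *
      ∫⁻ x in Cube (0 : Euc n) 1, ENNReal.ofReal (w x) ^ q := by
    refine ENNReal.mul_pos (ENNReal.inv_ne_zero.2 hVtop) ?_
    exact (lintegral_wq_pos hn hq0 hw hwpos hh1).ne'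
  have hfac2 : (0:ℝ≥0∞) < (if p = 1 then
        (essSup (fun x => (ENNReal.ofReal (w x))⁻¹) (volume.restrict (Cube (0 : Euc n) 1))) ^ q
      else
        ((volume (Cube (0 : Euc n) 1))⁻¹ * ∫⁻ x in Cube (0 : Euc n) 1,
            ENNReal.ofReal (w x) ^ (-(dualExp p))) ^ (q / dualExp p)) := by
    split_ifs with hp1
    · -- essSup positive
      have hS : essSup (fun x => (ENNReal.ofReal (w x))⁻¹)
          (volume.restrict (Cube (0 : Euc n) 1)) ≠ 0 := by
        intro hS0
        have hae := ENNReal.ae_le_essSup (μ := volume.restrict (Cube (0 : Euc n) 1))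
          (fun x => (ENNReal.ofReal (w x))⁻¹)
        rw [hS0] at hae
        have : (volume.restrict (Cube (0 : Euc n) 1))
            {x | ¬ ((ENNReal.ofReal (w x))⁻¹ ≤ 0)} = 0 := ae_iff.1 hae
        have huniv : {x : Euc n | ¬ ((ENNReal.ofReal (w x))⁻¹ ≤ 0)} = univ := by
          refine eq_univ_of_forall fun x => ?_
          simp only [mem_setOf_eq, le_zero_iff]
          exact (ENNReal.inv_ne_zero.2 ENNReal.ofReal_ne_top)
        rw [huniv] at this
        simp only [Measure.restrict_apply MeasurableSet.univ, univ_inter] at this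
        exact absurd this (by
          rw [volume_cube]
          exact pow_ne_zero _ (by simp))
      simp only [pos_iff_ne_zero, Ne, ENNReal.rpow_eq_zero_iff, not_or]
      constructor
      · rintro ⟨h1, -⟩; exact hS h1
      · rintro ⟨-, h2⟩; linarith
    · -- sigma positive
      have hσ : 0 < ∫⁻ x in Cube (0 : Euc n) 1, ENNReal.ofReal (w x) ^ (-(dualExp p)) := by
        have hmeas : Measurable fun x => ENNReal.ofReal (w x) ^ (-(dualExp p)) :=
          hw.ennreal_ofReal.pow_const _
        rw [lintegral_pos_iff_support hmeas]
        have hsupp : (Function.support fun x => ENNReal.ofReal (w x) ^ (-(dualExp p))) = univ := by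
          refine eq_univ_of_forall fun x => ?_
          simp only [Function.mem_support, Ne, ENNReal.rpow_eq_zero_iff, not_or]
          have hd0 : 0 < dualExp p :=
            div_pos (by linarith [lt_of_le_of_ne hp (Ne.symm hp1)])
              (by linarith [lt_of_le_of_ne hp (Ne.symm hp1)])
          constructor
          · rintro ⟨-, h2⟩; linarith
          · rintro ⟨h1, -⟩; exact ENNReal.ofReal_ne_top h1
        rw [hsupp]
        simp only [Measure.restrict_apply MeasurableSet.univ, univ_inter]
        rw [volume_cube]
        exact pos_iff_ne_zero.2 (pow_ne_zero _ (by simp))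
      refine pos_iff_ne_zero.2 ?_
      rw [Ne, ENNReal.rpow_eq_zero_iff, not_or]
      have hd0 : 0 < dualExp p :=
        div_pos (by linarith [lt_of_le_of_ne hp (Ne.symm hp1)])
          (by linarith [lt_of_le_of_ne hp (Ne.symm hp1)])
      constructor
      · rintro ⟨h1, -⟩
        exact (mul_ne_zero (ENNReal.inv_ne_zero.2 hVtop) hσ.ne') h1
      · rintro ⟨-, h2⟩
        exact absurd h2 (not_lt.2 (div_nonneg hq0.le hd0.le))
  calc (0:ℝ≥0∞) < _ * _ := ENNReal.mul_pos hfac1.ne' hfac2.ne'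
    _ ≤ Apq p q w := le_Apq w 0 hh1

lemma Apq_eq_top (hn : 0 < n) (hp : 1 ≤ p) (hq0 : 0 < q) (hw : Measurable w)
    (hw0 : ∀ x, 0 ≤ w x)
    (hZ : volume {x | w x = 0} ≠ 0) (hP : volume {x | 0 < w x} ≠ 0) :
    Apq p q w = ⊤ := by
  set Z := {x : Euc n | w x = 0} with hZdef
  set P := {x : Euc n | 0 < w x} with hPdef
  have hZm : MeasurableSet Z := hw (measurableSet_singleton 0)
  have hPm : MeasurableSet P := measurableSet_lt measurable_const hw
  -- find a big cube
  have hZu : (⋃ m : ℕ, Z ∩ Cube (WithLp.toLp 2 fun _ => -(m:ℝ)) (2*m)) = Z := by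
    rw [← inter_iUnion, iUnion_bigCube hn, inter_univ]
  have hPu : (⋃ m : ℕ, P ∩ Cube (WithLp.toLp 2 fun _ => -(m:ℝ)) (2*m)) = P := by
    rw [← inter_iUnion, iUnion_bigCube hn, inter_univ]
  have hmonoZ : Monotone (fun m : ℕ => Z ∩ Cube (WithLp.toLp 2 fun _ => -(m:ℝ)) (2*m)) :=
    fun k l hkl => inter_subset_inter_right _ (bigCube_mono hkl)
  have hmonoP : Monotone (fun m : ℕ => P ∩ Cube (WithLp.toLp 2 fun _ => -(m:ℝ)) (2*m)) :=
    fun k l hkl => inter_subset_inter_right _ (bigCube_mono hkl)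
  obtain ⟨m₁, hm₁⟩ : ∃ m : ℕ, volume (Z ∩ Cube (WithLp.toLp 2 fun _ => -(m:ℝ)) (2*m)) ≠ 0 := by
    by_contra hc
    push_neg at hc
    apply hZ
    rw [← hZu, hmonoZ.measure_iUnion]
    simp [hc]
  obtain ⟨m₂, hm₂⟩ : ∃ m : ℕ, volume (P ∩ Cube (WithLp.toLp 2 fun _ => -(m:ℝ)) (2*m)) ≠ 0 := by
    by_contra hc
    push_neg at hc
    apply hP
    rw [← hPu, hmonoP.measure_iUnion]
    simp [hc]
  set m := max m₁ m₂ + 1 with hm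
  set Q := Cube (n := n) (WithLp.toLp 2 fun _ => -(m:ℝ)) (2*m) with hQ
  have hhm : (0:ℝ) < 2*m := by positivity
  have hZQ : volume (Z ∩ Q) ≠ 0 := by
    refine fun h0 => hm₁ (measure_mono_null ?_ h0)
    exact hmonoZ (le_trans (le_max_left m₁ m₂) (Nat.le_succ _))
  have hPQ : volume (P ∩ Q) ≠ 0 := by
    refine fun h0 => hm₂ (measure_mono_null ?_ h0)
    exact hmonoP (le_trans (le_max_right m₁ m₂) (Nat.le_succ _))
  have hV0 : volume Q ≠ 0 := by
    rw [hQ, volume_cube]; exact pow_ne_zero _ (ENNReal.ofReal_pos.2 hhm).ne'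
  have hVtop : volume Q ≠ ⊤ := by
    rw [hQ, volume_cube]; exact ENNReal.pow_ne_top ENNReal.ofReal_ne_top
  -- first factor positive
  have hfac1 : (volume Q)⁻¹ * (∫⁻ x in Q, ENNReal.ofReal (w x) ^ q) ≠ 0 := by
    refine mul_ne_zero (ENNReal.inv_ne_zero.2 hVtop) ?_
    have hmeas : Measurable fun x => ENNReal.ofReal (w x) ^ q := hw.ennreal_ofReal.pow_const q
    rw [← pos_iff_ne_zero, lintegral_pos_iff_support hmeas]
    have hPsub : P ⊆ Function.support fun x => ENNReal.ofReal (w x) ^ q := by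
      intro x hx
      simp only [Function.mem_support, Ne, ENNReal.rpow_eq_zero_iff, not_or]
      have hxP : 0 < w x := hx
      constructor
      · rintro ⟨h1, -⟩; exact (ENNReal.ofReal_pos.2 hxP).ne' h1
      · rintro ⟨h1, -⟩; exact ENNReal.ofReal_ne_top h1
    have h1 : (0:ℝ≥0∞) < volume.restrict Q P :=
      pos_iff_ne_zero.2 (by rw [Measure.restrict_apply hPm]; exact hPQ)
    exact lt_of_lt_of_le h1 (measure_mono hPsub)
  -- second factor infinite
  have hfac2 : (if p = 1 then
        (essSup (fun x => (ENNReal.ofReal (w x))⁻¹) (volume.restrict Q)) ^ q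
      else
        ((volume Q)⁻¹ * ∫⁻ x in Q,
            ENNReal.ofReal (w x) ^ (-(dualExp p))) ^ (q / dualExp p)) = ⊤ := by
    split_ifs with hp1
    · have hS : essSup (fun x => (ENNReal.ofReal (w x))⁻¹) (volume.restrict Q) = ⊤ := by
        by_contra hS
        have hae := ENNReal.ae_le_essSup (μ := volume.restrict Q)
          (fun x => (ENNReal.ofReal (w x))⁻¹)
        have hsub : Z ⊆ {x | ¬ ((ENNReal.ofReal (w x))⁻¹ ≤
            essSup (fun x => (ENNReal.ofReal (w x))⁻¹) (volume.restrict Q))} := by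
          intro x hx
          simp only [mem_setOf_eq, not_le]
          have : w x = 0 := hx
          rw [this]
          simp only [ENNReal.ofReal_zero, ENNReal.inv_zero]
          exact lt_top_iff_ne_top.2 hS
        have hnull := measure_mono_null hsub (ae_iff.1 hae)
        rw [Measure.restrict_apply hZm] at hnull
        exact hZQ hnull
      rw [hS]
      exact ENNReal.top_rpow_of_pos hq0
    · have hp1' : 1 < p := lt_of_le_of_ne hp (Ne.symm hp1)
      have hd0 : 0 < dualExp p := div_pos (by linarith) (by linarith)
      have hσ : (∫⁻ x in Q, ENNReal.ofReal (w x) ^ (-(dualExp p))) = ⊤ := by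
        refine top_unique ?_
        calc (⊤:ℝ≥0∞) = ∫⁻ x in Z ∩ Q, ⊤ := by
              rw [setLIntegral_const]
              rw [ENNReal.top_mul hZQ]
          _ = ∫⁻ x in Z ∩ Q, ENNReal.ofReal (w x) ^ (-(dualExp p)) := by
              refine (setLIntegral_congr_fun (hZm.inter (measurableSet_cube _ _)) ?_).symm
              refine fun x hx => ?_
              have hx0 : w x = 0 := hx.1
              show ENNReal.ofReal (w x) ^ (-(dualExp p)) = ⊤
              rw [hx0]
              simp only [ENNReal.ofReal_zero]
              rw [ENNReal.zero_rpow_of_neg (by linarith)]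
          _ ≤ _ := lintegral_mono_set inter_subset_right
      rw [hσ, ENNReal.mul_top (ENNReal.inv_ne_zero.2 hVtop)]
      exact ENNReal.top_rpow_of_pos (div_pos hq0 hd0)
  refine top_unique ?_
  calc (⊤:ℝ≥0∞) = ((volume Q)⁻¹ * ∫⁻ x in Q, ENNReal.ofReal (w x) ^ q) * _ := by
        rw [hfac2, ENNReal.mul_top hfac1]
    _ ≤ Apq p q w := le_Apq w _ hhm

end Degenerate

lemma wMeas_le_withDensity {w : Euc n → ℝ} {q : ℝ} (hw0 : ∀ x, 0 ≤ w x) (hq0 : 0 < q)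
    (E : Set (Euc n)) :
    wMeas (fun x => w x ^ q) E ≤
      (volume.withDensity fun x => ENNReal.ofReal (w x) ^ q) E := by
  have hint : ∀ x : Euc n, ENNReal.ofReal (w x ^ q) = ENNReal.ofReal (w x) ^ q :=
    fun x => (ENNReal.ofReal_rpow_of_nonneg (hw0 x) hq0.le).symm
  rw [measure_eq_iInf]
  refine le_iInf fun A => le_iInf fun hEA => le_iInf fun hA => ?_
  rw [withDensity_apply _ hA]
  unfold wMeas
  calc ∫⁻ x in E, ENNReal.ofReal (w x ^ q)
      = ∫⁻ x in E, ENNReal.ofReal (w x) ^ q := by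
        exact lintegral_congr fun x => hint x
    _ ≤ ∫⁻ x in A, ENNReal.ofReal (w x) ^ q := lintegral_mono_set hEA

/-- Weak-type bound for the fractional maximal operator (equation (2.9)):
`‖M_α f‖_{L^{q,∞}(w^q)} ≤ c [w]_{A_{p,q}}^{1/q} ‖w f‖_{L^p}`. -/
theorem fracMax_weak_type_bound
    (n : ℕ) (hn : 0 < n) (α p q : ℝ) (hα : 0 ≤ α) (hαn : α < n)
    (hp : 1 ≤ p) (hpn : α * p < n) (hq : 1 / q = 1 / p - α / n) :
    ∃ c : ℝ, 0 < c ∧ ∀ w f : Euc n → ℝ, Measurable w → (∀ x, 0 ≤ w x) → Measurable f →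
      Apq p q w < ⊤ →
      weakLpE (fun x => w x ^ q) (fracMax α f) q ≤
        ENNReal.ofReal c * Apq p q w ^ (1 / q) * wLp w f p := by
  have hp0 : (0:ℝ) < p := lt_of_lt_of_le zero_lt_one hp
  have hn' : (0:ℝ) < n := Nat.cast_pos.2 hn
  have hα0 : 0 ≤ α/(n:ℝ) := div_nonneg hα hn'.le
  have hαn' : α/(n:ℝ) < 1/p := (div_lt_div_iff₀ hn' hp0).2 (by linarith)
  have h1q : 0 < 1/q := by rw [hq]; linarith
  have hq0 : 0 < q := one_div_pos.mp h1q
  have hpq : p ≤ q := by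
    have h2 : 1/q ≤ 1/p := by rw [hq]; linarith
    exact le_of_one_div_le_one_div hq0 h2
  have hsn : (0:ℝ) < Real.sqrt n := Real.sqrt_pos.2 hn'
  set c₀ : ℝ := (8 * Real.sqrt n) ^ ((n:ℝ) * (1 + q / dualExp p)) with hc₀
  have hc₀pos : 0 < c₀ := Real.rpow_pos_of_pos (by linarith) _
  refine ⟨c₀ ^ (1/q), Real.rpow_pos_of_pos hc₀pos _, ?_⟩
  intro w f hw hw0 hf hApq
  by_cases hZ : volume {x : Euc n | ¬ 0 < w x} = 0
  · -- w > 0 a.e.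
    have hwpos : ∀ᵐ x, 0 < w x := ae_iff.mpr hZ
    by_cases hA : (∫⁻ y, (ENNReal.ofReal (w y) * ENNReal.ofReal |f y|) ^ p) = ⊤
    · -- RHS is infinite
      have hwLp : wLp w f p = ⊤ := by
        unfold wLp
        rw [hA]
        exact ENNReal.top_rpow_of_pos (by positivity)
      rw [hwLp]
      have h1 : ENNReal.ofReal (c₀^(1/q)) * Apq p q w ^ (1/q) ≠ 0 := by
        refine mul_ne_zero (ENNReal.ofReal_pos.2 (Real.rpow_pos_of_pos hc₀pos _)).ne' ?_
        rw [Ne, ENNReal.rpow_eq_zero_iff, not_or]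
        constructor
        · rintro ⟨h1, -⟩; exact (Apq_pos hn hp hq0 hw hwpos).ne' h1
        · rintro ⟨-, h2⟩; linarith
      rw [ENNReal.mul_top h1]
      exact le_top
    · -- main case
      set ν := volume.withDensity (fun x => ENNReal.ofReal (w x) ^ q) with hν
      set Atot := ∫⁻ y, (ENNReal.ofReal (w y) * ENNReal.ofReal |f y|) ^ p with hAtot
      unfold weakLpE
      refine iSup_le fun t => iSup_le fun ht => ?_
      set E := {x : Euc n | ENNReal.ofReal t < fracMax α f x} with hE
      have ht0 : ENNReal.ofReal t ≠ 0 := (ENNReal.ofReal_pos.2 ht).ne'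
      have httop : ENNReal.ofReal t ≠ ⊤ := ENNReal.ofReal_ne_top
      have hEunion : E = ⋃ k : ℕ, {x | ENNReal.ofReal t < gR α ((k:ℝ)+1) f x} := by
        ext x
        simp only [hE, mem_setOf_eq, mem_iUnion, fracMax_eq_iSup_gR, lt_iSup_iff]
      have hmono : Monotone
          (fun k : ℕ => {x : Euc n | ENNReal.ofReal t < gR α ((k:ℝ)+1) f x}) := by
        intro k l hkl x hx
        refine lt_of_lt_of_le hx (gR_mono ?_)
        have := (Nat.cast_le (α := ℝ)).2 hkl
        linarith
      have hνk : ∀ k : ℕ, ν {x | ENNReal.ofReal t < gR α ((k:ℝ)+1) f x} ≤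
          ENNReal.ofReal t ^ (-q) * (ENNReal.ofReal c₀ * Apq p q w * Atot ^ (q/p)) := by
        intro k
        have hb := level_bound (R := (k:ℝ)+1) hn hp hq0 hpq hq hw hf hwpos ht
        calc ν {x | ENNReal.ofReal t < gR α ((k:ℝ)+1) f x}
            = (ENNReal.ofReal t ^ (-q) * ENNReal.ofReal t ^ q) *
                ν {x | ENNReal.ofReal t < gR α ((k:ℝ)+1) f x} := by
              rw [← ENNReal.rpow_add _ _ ht0 httop, neg_add_cancel, ENNReal.rpow_zero, one_mul]
          _ = ENNReal.ofReal t ^ (-q) * (ENNReal.ofReal t ^ q *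
                ν {x | ENNReal.ofReal t < gR α ((k:ℝ)+1) f x}) := mul_assoc _ _ _
          _ ≤ _ := mul_le_mul_right hb _
      have hwm : wMeas (fun x => w x ^ q) E ≤
          ENNReal.ofReal t ^ (-q) * (ENNReal.ofReal c₀ * Apq p q w * Atot ^ (q/p)) := by
        refine le_trans (wMeas_le_withDensity hw0 hq0 E) ?_
        rw [hEunion]
        show ν _ ≤ _
        rw [hmono.measure_iUnion]
        exact iSup_le hνk
      have e2 : (ENNReal.ofReal t ^ (-q)) ^ (1/q) = (ENNReal.ofReal t)⁻¹ := by
        rw [← ENNReal.rpow_mul, show -q*(1/q) = -1 by field_simp, ENNReal.rpow_neg_one]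
      have e3 : (Atot ^ (q/p)) ^ (1/q) = Atot ^ (1/p) := by
        rw [← ENNReal.rpow_mul, show q/p*(1/q) = 1/p by field_simp]
      have e4 : (ENNReal.ofReal c₀) ^ (1/q) = ENNReal.ofReal (c₀^(1/q)) :=
        ENNReal.ofReal_rpow_of_nonneg hc₀pos.le h1q.le
      have hwLpA : wLp w f p = Atot ^ (1/p) := rfl
      calc ENNReal.ofReal t * wMeas (fun x => w x ^ q) E ^ (1/q)
          ≤ ENNReal.ofReal t * (ENNReal.ofReal t ^ (-q) *
              (ENNReal.ofReal c₀ * Apq p q w * Atot ^ (q/p))) ^ (1/q) :=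
            mul_le_mul_right (ENNReal.rpow_le_rpow hwm h1q.le) _
        _ = ENNReal.ofReal t * ((ENNReal.ofReal t)⁻¹ *
              (ENNReal.ofReal (c₀^(1/q)) * Apq p q w ^ (1/q) * Atot ^ (1/p))) := by
            rw [ENNReal.mul_rpow_of_nonneg _ _ h1q.le, ENNReal.mul_rpow_of_nonneg _ _ h1q.le,
              ENNReal.mul_rpow_of_nonneg _ _ h1q.le, e2, e3, e4]
        _ = (ENNReal.ofReal t * (ENNReal.ofReal t)⁻¹) *
              (ENNReal.ofReal (c₀^(1/q)) * Apq p q w ^ (1/q) * Atot ^ (1/p)) := by ring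
        _ = ENNReal.ofReal (c₀^(1/q)) * Apq p q w ^ (1/q) * wLp w f p := by
            rw [ENNReal.mul_inv_cancel ht0 httop, one_mul, hwLpA]
  · have hZeq : {x : Euc n | ¬ 0 < w x} = {x | w x = 0} := by
      ext x
      simp only [mem_setOf_eq, not_lt]
      exact ⟨fun hx => le_antisymm hx (hw0 x), fun hx => le_of_eq hx⟩
    by_cases hP : volume {x : Euc n | 0 < w x} = 0
    · -- w = 0 a.e., LHS = 0
      have hwz : ∀ᵐ x, w x = 0 := by
        rw [ae_iff]
        convert hP using 2
        ext x
        simp only [mem_setOf_eq]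
        exact ⟨fun hx => lt_of_le_of_ne (hw0 x) (Ne.symm hx), fun hx => hx.ne'⟩
      have hzero : ∀ᵐ x, ENNReal.ofReal (w x ^ q) = 0 := by
        filter_upwards [hwz] with x hx
        rw [hx, Real.zero_rpow hq0.ne', ENNReal.ofReal_zero]
      unfold weakLpE
      refine iSup_le fun t => iSup_le fun ht => ?_
      have hm0 : wMeas (fun x => w x ^ q) {x | ENNReal.ofReal t < fracMax α f x} = 0 := by
        unfold wMeas
        refine le_antisymm (le_trans (setLIntegral_le_lintegral _ _) (le_of_eq ?_)) (zero_le)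
        calc ∫⁻ x, ENNReal.ofReal (w x ^ q) = ∫⁻ _, 0 := lintegral_congr_ae hzero
          _ = 0 := lintegral_zero
      rw [hm0, ENNReal.zero_rpow_of_pos h1q, mul_zero]
      exact zero_le
    · have htop := Apq_eq_top hn hp hq0 hw hw0 (by rw [← hZeq]; exact hZ) hP
      rw [htop] at hApq
      exact absurd hApq (lt_irrefl ⊤)

end
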